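/- Let T be a (p,q)-banded matrix with nonvanishing extreme diagonals and let B^{(b)}_n (b ∈ {1,…,q}) be the right recursion polynomials for any choice of the constants ξ^{(b)}_j. Then for every N ∈ ℕ, the characteristic polynomial satisfies P_N = β_N · det B_N as an identity in ℝ[x], where B_N is the q×q matrix of polynomials with (i,b) entry B^{(b)}_{N+i} (i ∈ {0,…,q−1}, b ∈ {1,…,q}). -/

import Mathlib

open Equiv in
lemma aux_sign_rot {n : ℕ} (hn : 1 ≤ n) (k : ℕ) (ρ : Equiv.Perm (Fin n))
    (h : ∀ i, ((ρ i : ℕ)) = ((i : ℕ) + k) % n) :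
    Equiv.Perm.sign ρ = (-1) ^ ((n - 1) * k) := by
  obtain ⟨m, rfl⟩ : ∃ m, n = m + 1 := ⟨n - 1, by omega⟩
  have key : ∀ (k : ℕ) (i : Fin (m + 1)), (((finRotate (m + 1)) ^ k) i : ℕ) = ((i : ℕ) + k) % (m + 1) := by
    intro k
    induction k with
    | zero => intro i; simp [Nat.mod_eq_of_lt i.isLt]
    | succ k ih =>
      intro i
      rw [pow_succ', Equiv.Perm.mul_apply, finRotate_succ_apply, Fin.add_def, ih,
        ← Nat.add_assoc, Nat.add_mod (↑i + k) 1]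
      simp
  have hρ : ρ = (finRotate (m + 1)) ^ k :=
    Equiv.ext fun i => Fin.ext <| (h i).trans (key k i).symm
  rw [hρ, map_pow, sign_finRotate, ← pow_mul]

lemma aux_par (q N : ℕ) (hq : 1 ≤ q) : ((N + q - 1) * q + N) % 2 = ((q - 1) * N) % 2 := by
  obtain ⟨r, rfl⟩ : ∃ r, q = r + 1 := ⟨q - 1, by omega⟩
  have h0 : N + (r + 1) - 1 = N + r := by omega
  have h1 : (r + 1) - 1 = r := by omega
  rw [h0, h1]
  have h2 : (N + r) * (r + 1) + N = r * N + (r * (r + 1) + 2 * N) := by ring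
  rw [h2, Nat.add_mod, Nat.even_iff.mp ((Nat.even_mul_succ_self r).add (even_two_mul N))]
  simp

lemma aux_neg_one_pow_par (a b : ℕ) (h : a % 2 = b % 2) :
    ((-1 : Polynomial ℝ)) ^ a = (-1) ^ b := by
  rw [← Nat.div_add_mod a 2, ← Nat.div_add_mod b 2, pow_add, pow_add, pow_mul, pow_mul]
  simp [h]

/-- For a `(p,q)`-banded matrix with nonvanishing extreme diagonals, the characteristic
polynomials of the leading principal submatrices satisfy `P_N = β_N · det B_N`, where
`B_N` is the `q×q` matrix of right recursion polynomials with `(i,b)` entry `B^{(b)}_{N+i}`. -/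
theorem charpoly_eq_det_right_recursion
    (p q : ℕ) (hp : 1 ≤ p) (hq : 1 ≤ q)
    (T : ℕ → ℕ → ℝ)
    (hband : ∀ i j, (j + p < i ∨ i + q < j) → T i j = 0)
    (hext : ∀ n, T (n + p) n ≠ 0 ∧ T n (n + q) ≠ 0)
    (ξ : ℕ → ℕ → ℝ) (B : ℕ → ℕ → Polynomial ℝ)
    (hB0 : ∀ b, 1 ≤ b → b ≤ q → ∀ n, n < b - 1 → B b n = 0)
    (hB1 : ∀ b, 1 ≤ b → b ≤ q → B b (b - 1) = 1)
    (hBconst : ∀ b, 1 ≤ b → b ≤ q → ∀ j, b ≤ j → j ≤ q - 1 → B b j = Polynomial.C (ξ b j))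
    (hBrec : ∀ b, 1 ≤ b → b ≤ q → ∀ n,
      ∑ m ∈ Finset.Icc (n - p) (n + q), Polynomial.C (T n m) * B b m
        = Polynomial.X * B b n)
    (P : ℕ → Polynomial ℝ)
    (hP0 : P 0 = 1)
    (hPsucc : ∀ N, P (N + 1) = (Matrix.of fun i j : Fin (N + 1) => T i j).charpoly)
    (β : ℕ → ℝ)
    (hβ : ∀ N, β N = (-1 : ℝ) ^ ((q - 1) * N) * ∏ k ∈ Finset.range N, T k (k + q)) :
    ∀ N, P N = Polynomial.C (β N) *
      (Matrix.of fun i b : Fin q => B ((b : ℕ) + 1) (N + (i : ℕ))).det := by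
  classical
  intro N
  open Matrix Polynomial in
  -- index equivalences
  set e₁ : Fin N ⊕ Fin q ≃ Fin (N + q) := finSumFinEquiv with he₁def
  set e₂ : Fin N ⊕ Fin q ≃ Fin (N + q) :=
    (Equiv.sumComm (Fin N) (Fin q)).trans (finSumFinEquiv.trans (finCongr (Nat.add_comm q N)))
    with he₂def
  have he₁l : ∀ n : Fin N, ((e₁ (Sum.inl n)) : ℕ) = (n : ℕ) := by simp [he₁def]
  have he₁r : ∀ i : Fin q, ((e₁ (Sum.inr i)) : ℕ) = N + (i : ℕ) := by simp [he₁def]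
  have he₂l : ∀ n : Fin N, ((e₂ (Sum.inl n)) : ℕ) = q + (n : ℕ) := by
    intro n; simp [he₂def]; omega
  have he₂r : ∀ i : Fin q, ((e₂ (Sum.inr i)) : ℕ) = (i : ℕ) := by simp [he₂def]
  -- matrices
  set Mf : Matrix (Fin (N + q)) (Fin (N + q)) (Polynomial ℝ) := fun i j =>
    if (i : ℕ) < N then (if (i : ℕ) = (j : ℕ) then X else 0) - C (T i j)
    else (if (i : ℕ) = (j : ℕ) then 1 else 0) with hMf
  set Wf : Matrix (Fin (N + q)) (Fin (N + q)) (Polynomial ℝ) := fun k j =>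
    if (j : ℕ) < q then B ((j : ℕ) + 1) k else (if (k : ℕ) = (j : ℕ) then 1 else 0) with hWf
  set Amat : Matrix (Fin N) (Fin N) (Polynomial ℝ) := fun n m =>
    (if (n : ℕ) = (m : ℕ) then X else 0) - C (T n m) with hAmat
  set A2 : Matrix (Fin N) (Fin N) (Polynomial ℝ) := fun n m =>
    (if (n : ℕ) = q + (m : ℕ) then X else 0) - C (T n (q + m)) with hA2
  set V2 : Matrix (Fin q) (Fin q) (Polynomial ℝ) := fun i b => B ((b : ℕ) + 1) (N + (i : ℕ)) with hV2
  set Lmat : Matrix (Fin q) (Fin q) (Polynomial ℝ) := fun i b => B ((b : ℕ) + 1) (i : ℕ) with hLmat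
  set Kmat : Matrix (Fin N) (Fin q) (Polynomial ℝ) := fun n b => B ((b : ℕ) + 1) (q + (n : ℕ)) with hKmat
  set Btm : Matrix (Fin N) (Fin q) (Polynomial ℝ) := fun n i =>
    (if (n : ℕ) = N + (i : ℕ) then X else 0) - C (T n (N + i)) with hBtm
  set Emat : Matrix (Fin q) (Fin N) (Polynomial ℝ) := fun i m =>
    if N + (i : ℕ) = q + (m : ℕ) then 1 else 0 with hEmat
  -- step A : block structure of Mf
  have hMblock : Mf.submatrix e₁ e₁ = Matrix.fromBlocks Amat Btm 0 1 := by
    apply Matrix.ext; intro i j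
    rcases i with n | i <;> rcases j with m | b <;> simp only [Matrix.submatrix_apply] <;>
      simp only [Matrix.submatrix_apply, Matrix.fromBlocks, Matrix.of_apply, Sum.elim_inl,
        Sum.elim_inr, hMf, he₁l, he₁r, hAmat, hBtm, Matrix.one_apply, Matrix.zero_apply,
        Fin.ext_iff]
    · simp [n.isLt]
    · simp [n.isLt]
    · rw [if_neg (by omega), if_neg (by omega)]
    · rw [if_neg (by omega)]
      by_cases h : (i : ℕ) = (b : ℕ)
      · rw [if_pos (by omega), if_pos h]
      · rw [if_neg (by omega), if_neg h]
  -- step B : det Mf = P N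
  have hdetMf : Mf.det = P N := by
    have h1 : Mf.det = Amat.det := by
      rw [← Matrix.det_submatrix_equiv_self e₁ Mf, hMblock, Matrix.det_fromBlocks_zero₂₁,
        Matrix.det_one, mul_one]
    rw [h1]
    match N, Amat, hAmat with
    | 0, Amat, hAmat => rw [hP0]; exact Matrix.det_fin_zero
    | (N' + 1), Amat, hAmat =>
      rw [hPsucc N']
      have hA : Amat = Matrix.charmatrix (Matrix.of fun i j : Fin (N' + 1) => T i j) := by
        apply Matrix.ext; intro i j
        by_cases h : i = j
        · subst h
          rw [Matrix.charmatrix_apply_eq, hAmat]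
          simp
        · rw [Matrix.charmatrix_apply_ne _ _ _ h, hAmat]
          simp only [Matrix.of_apply]
          rw [if_neg (fun hc => h (Fin.ext hc))]
          ring
      rw [hA]
      rfl
  -- step C : block structure of Wf
  have hWblock : Wf.submatrix e₂ e₂ = Matrix.fromBlocks 1 Kmat 0 Lmat := by
    apply Matrix.ext; intro i j
    rcases i with n | i <;> rcases j with m | b <;> simp only [Matrix.submatrix_apply] <;>
      simp only [Matrix.submatrix_apply, Matrix.fromBlocks, Matrix.of_apply, Sum.elim_inl,
        Sum.elim_inr, hWf, he₂l, he₂r, hKmat, hLmat, Matrix.one_apply, Matrix.zero_apply]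
    · rw [if_neg (by omega)]
      by_cases h : (n : ℕ) = (m : ℕ)
      · rw [if_pos (by omega), if_pos (Fin.ext h)]
      · rw [if_neg (by omega), if_neg (fun hc => h (by rw [hc]))]
    · rw [if_pos b.isLt]
    · rw [if_neg (by omega), if_neg (by omega)]
    · rw [if_pos b.isLt]
  -- step D : det Wf = 1
  have hdetWf : Wf.det = 1 := by
    rw [← Matrix.det_submatrix_equiv_self e₂ Wf, hWblock, Matrix.det_fromBlocks_zero₂₁,
      Matrix.det_one, one_mul]
    rw [Matrix.det_of_lowerTriangular Lmat]
    · apply Finset.prod_eq_one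
      intro i _
      rw [hLmat]
      simpa using hB1 ((i : ℕ) + 1) (by omega) (by omega)
    · intro i j hij
      rw [hLmat]
      exact hB0 ((j : ℕ) + 1) (by omega) (by omega) i (by simpa using hij)
  -- step E : block structure of Mf * Wf
  have hZ : (Mf * Wf).submatrix e₁ e₂ = Matrix.fromBlocks A2 0 Emat V2 := by
    apply Matrix.ext; intro i j
    rcases i with n | i <;> rcases j with m | b <;>
      simp only [Matrix.submatrix_apply, Matrix.fromBlocks, Matrix.of_apply, Sum.elim_inl,
        Sum.elim_inr, Matrix.mul_apply, Matrix.zero_apply]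
    · -- rows < N, cols ≥ q : A2 block
      rw [hA2]
      have : ∀ k : Fin (N + q), Mf (e₁ (Sum.inl n)) k * Wf k (e₂ (Sum.inl m))
          = Mf (e₁ (Sum.inl n)) k * (if k = e₂ (Sum.inl m) then 1 else 0) := by
        intro k
        rw [hWf]
        simp only [he₂l]
        rw [if_neg (by omega)]
        congr 1
        by_cases h : (k : ℕ) = q + (m : ℕ)
        · rw [if_pos h, if_pos (Fin.ext (by rw [h, he₂l]))]
        · rw [if_neg h, if_neg (fun hc => h (by rw [hc, he₂l]))]
      rw [Finset.sum_congr rfl (fun k _ => this k)]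
      simp only [mul_ite, mul_one, mul_zero]
      rw [Finset.sum_ite_eq' Finset.univ (e₂ (Sum.inl m)) (fun k => Mf (e₁ (Sum.inl n)) k)]
      rw [if_pos (Finset.mem_univ _), hMf]
      simp only [he₁l, he₂l]
      rw [if_pos n.isLt]
    · -- rows < N, cols < q : zero block (the recursion)
      have hsum : ∀ k : Fin (N + q), Mf (e₁ (Sum.inl n)) k * Wf k (e₂ (Sum.inr b))
          = ((if (n : ℕ) = (k : ℕ) then X else 0) - C (T n k)) * B ((b : ℕ) + 1) k := by
        intro k
        rw [hMf, hWf]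
        simp only [he₁l, he₂r]
        rw [if_pos n.isLt, if_pos b.isLt]
      rw [Finset.sum_congr rfl (fun k _ => hsum k)]
      have expand : ∀ k : Fin (N + q),
          ((if (n : ℕ) = (k : ℕ) then X else 0) - C (T n k)) * B ((b : ℕ) + 1) k
          = (if e₁ (Sum.inl n) = k then X * B ((b : ℕ) + 1) k else 0)
            - C (T n k) * B ((b : ℕ) + 1) k := by
        intro k
        rw [sub_mul, ite_mul, zero_mul]
        congr 2
        exact propext ⟨fun h => Fin.ext (by rw [he₁l, h]),
          fun h => by rw [← h]; exact (he₁l n).symm⟩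
      rw [Finset.sum_congr rfl (fun k _ => expand k), Finset.sum_sub_distrib,
        Finset.sum_ite_eq Finset.univ (e₁ (Sum.inl n))
          (fun k => X * B ((b : ℕ) + 1) k)]
      rw [if_pos (Finset.mem_univ _)]
      simp only [he₁l]
      have hfin : (∑ k : Fin (N + q), C (T (n : ℕ) (k : ℕ)) * B ((b : ℕ) + 1) (k : ℕ))
          = ∑ k ∈ Finset.range (N + q), C (T (n : ℕ) k) * B ((b : ℕ) + 1) k :=
        Fin.sum_univ_eq_sum_range (fun k => C (T (n : ℕ) k) * B ((b : ℕ) + 1) k) (N + q)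
      rw [hfin]
      have hicc : (∑ k ∈ Finset.range (N + q), C (T (n : ℕ) k) * B ((b : ℕ) + 1) k)
          = ∑ k ∈ Finset.Icc ((n : ℕ) - p) ((n : ℕ) + q), C (T (n : ℕ) k) * B ((b : ℕ) + 1) k := by
        symm
        apply Finset.sum_subset
        · intro x hx
          rw [Finset.mem_Icc] at hx
          rw [Finset.mem_range]
          have := n.isLt
          omega
        · intro x _ hx
          rw [Finset.mem_Icc] at hx
          have : T (n : ℕ) x = 0 := hband _ _ (by omega)
          rw [this]
          simp
      rw [hicc, hBrec ((b : ℕ) + 1) (by omega) (by omega) (n : ℕ)]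
      exact sub_self _
    · -- rows ≥ N, cols ≥ q : Emat block
      have : ∀ k : Fin (N + q), Mf (e₁ (Sum.inr i)) k * Wf k (e₂ (Sum.inl m))
          = (if e₁ (Sum.inr i) = k then 1 else 0) * Wf k (e₂ (Sum.inl m)) := by
        intro k
        rw [hMf]
        simp only [he₁r]
        rw [if_neg (by omega)]
        congr 1
        by_cases h : N + (i : ℕ) = (k : ℕ)
        · rw [if_pos h, if_pos (Fin.ext (by rw [he₁r, h]))]
        · rw [if_neg h, if_neg (fun hc => h (by rw [← hc, he₁r]))]
      rw [Finset.sum_congr rfl (fun k _ => this k)]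
      simp only [ite_mul, one_mul, zero_mul]
      rw [Finset.sum_ite_eq Finset.univ (e₁ (Sum.inr i)) (fun k => Wf k (e₂ (Sum.inl m)))]
      rw [if_pos (Finset.mem_univ _), hWf, hEmat]
      simp only [he₁r, he₂l]
      rw [if_neg (by omega)]
    · -- rows ≥ N, cols < q : V2 block
      have : ∀ k : Fin (N + q), Mf (e₁ (Sum.inr i)) k * Wf k (e₂ (Sum.inr b))
          = (if e₁ (Sum.inr i) = k then 1 else 0) * Wf k (e₂ (Sum.inr b)) := by
        intro k
        rw [hMf]
        simp only [he₁r]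
        rw [if_neg (by omega)]
        congr 1
        by_cases h : N + (i : ℕ) = (k : ℕ)
        · rw [if_pos h, if_pos (Fin.ext (by rw [he₁r, h]))]
        · rw [if_neg h, if_neg (fun hc => h (by rw [← hc, he₁r]))]
      rw [Finset.sum_congr rfl (fun k _ => this k)]
      simp only [ite_mul, one_mul, zero_mul]
      rw [Finset.sum_ite_eq Finset.univ (e₁ (Sum.inr i)) (fun k => Wf k (e₂ (Sum.inr b)))]
      rw [if_pos (Finset.mem_univ _), hWf, hV2]
      simp only [he₁r, he₂r]
      rw [if_pos b.isLt]
  -- step F : determinants and the sign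
  set τ : Equiv.Perm (Fin N ⊕ Fin q) := e₂.trans e₁.symm with hτdef
  have hτsub : ((Mf * Wf).submatrix e₁ e₁).submatrix id τ = (Mf * Wf).submatrix e₁ e₂ := by
    apply Matrix.ext; intro i j
    simp [hτdef]
  have hdetZ : A2.det * V2.det = (Equiv.Perm.sign τ : Polynomial ℝ) * P N := by
    have h1 : (Matrix.fromBlocks A2 0 Emat V2).det
        = (Equiv.Perm.sign τ : Polynomial ℝ) * ((Mf * Wf).submatrix e₁ e₁).det := by
      rw [← hZ, ← hτsub]
      exact Matrix.det_permute' τ _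
    rw [Matrix.det_fromBlocks_zero₁₂] at h1
    rw [Matrix.det_submatrix_equiv_self, Matrix.det_mul, hdetMf, hdetWf, mul_one] at h1
    exact h1
  have hsign : Equiv.Perm.sign τ = (-1 : ℤˣ) ^ ((N + q - 1) * q) := by
    have hgsign := Equiv.Perm.sign_eq_sign_of_equiv τ (e₁.symm.trans e₂) e₁
      (fun x => by simp [hτdef])
    rw [hgsign]
    apply aux_sign_rot (by omega) q (e₁.symm.trans e₂)
    intro i
    obtain ⟨x, rfl⟩ := e₁.surjective i
    rcases x with n | b
    · rw [Equiv.trans_apply, Equiv.symm_apply_apply, he₂l, he₁l]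
      have := n.isLt
      rw [Nat.mod_eq_of_lt (by omega)]
      omega
    · rw [Equiv.trans_apply, Equiv.symm_apply_apply, he₂r, he₁r]
      have hb := b.isLt
      have h3 : N + (b : ℕ) + q = (b : ℕ) + (N + q) := by omega
      rw [h3, Nat.add_mod_right, Nat.mod_eq_of_lt (by omega)]
  -- step G : compute det A2
  have hdetA2 : A2.det = (-1 : Polynomial ℝ) ^ N * C (∏ k ∈ Finset.range N, T k (k + q)) := by
    have htri : A2.BlockTriangular OrderDual.toDual := by
      intro i j hij
      have hij' : (i : ℕ) < (j : ℕ) := hij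
      show ((if (i : ℕ) = q + (j : ℕ) then X else 0) - C (T (i : ℕ) (q + (j : ℕ)))) = 0
      have hT : T (i : ℕ) (q + (j : ℕ)) = 0 := hband _ _ (Or.inr (by omega))
      rw [if_neg (by omega), hT]
      simp
    rw [Matrix.det_of_lowerTriangular A2 htri]
    calc ∏ i : Fin N, A2 i i
        = ∏ i : Fin N, (-1 : Polynomial ℝ) * C (T i ((i : ℕ) + q)) := by
          apply Finset.prod_congr rfl
          intro i _
          show ((if (i : ℕ) = q + (i : ℕ) then X else 0) - C (T (i : ℕ) (q + (i : ℕ))))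
            = (-1 : Polynomial ℝ) * C (T i ((i : ℕ) + q))
          rw [if_neg (by omega), show q + (i : ℕ) = (i : ℕ) + q from by omega]
          ring
      _ = (-1 : Polynomial ℝ) ^ N * C (∏ k ∈ Finset.range N, T k (k + q)) := by
          rw [Finset.prod_mul_distrib, Finset.prod_const, Finset.card_univ, Fintype.card_fin]
          congr 1
          rw [← map_prod]
          congr 1
          exact Fin.prod_univ_eq_prod_range (fun k => T k (k + q)) N
  -- final assembly
  have hmain : (-1 : Polynomial ℝ) ^ N * C (∏ k ∈ Finset.range N, T k (k + q)) * V2.det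
      = (-1 : Polynomial ℝ) ^ ((N + q - 1) * q) * P N := by
    rw [← hdetA2, hdetZ, hsign]
    push_cast
    ring
  have hPN : P N = (-1 : Polynomial ℝ) ^ ((N + q - 1) * q + N)
      * C (∏ k ∈ Finset.range N, T k (k + q)) * V2.det := by
    have hsq : (-1 : Polynomial ℝ) ^ ((N + q - 1) * q) * ((-1 : Polynomial ℝ) ^ ((N + q - 1) * q)) = 1 := by
      rw [← pow_add]
      exact Even.neg_one_pow ⟨(N + q - 1) * q, rfl⟩
    calc P N = (-1 : Polynomial ℝ) ^ ((N + q - 1) * q)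
        * ((-1 : Polynomial ℝ) ^ ((N + q - 1) * q) * P N) := by
          rw [← mul_assoc, hsq, one_mul]
      _ = (-1 : Polynomial ℝ) ^ ((N + q - 1) * q)
        * ((-1 : Polynomial ℝ) ^ N * C (∏ k ∈ Finset.range N, T k (k + q)) * V2.det) := by
          rw [hmain]
      _ = _ := by rw [pow_add]; ring
  show P N = C (β N) * V2.det
  rw [hβ, Polynomial.C_mul,
    show Polynomial.C ((-1 : ℝ) ^ ((q - 1) * N)) = (-1 : Polynomial ℝ) ^ ((q - 1) * N) from by
      rw [map_pow, map_neg, Polynomial.C_1],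
    hPN, aux_neg_one_pow_par ((N + q - 1) * q + N) ((q - 1) * N) (aux_par q N hq)]
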